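/- For every real ρ > 0 and every integer T ≥ 1, (1/(T−1)!)·∫₀^∞ ln(1 + ρx)·x^{T−1}·e^{−x} dx = e^{1/ρ} · Σ_{k=0}^{T−1} (1/ρ)^k · Γ(−k, 1/ρ), where Γ(−k, u) := ∫_u^∞ t^{−k−1}·e^{−t} dt is the upper incomplete Gamma function (which is finite for u > 0). -/

import Mathlib

/-- Upper incomplete Gamma function at negative integer order:
`Γ(−k, u) = ∫_u^∞ t^{−k−1}·e^{−t} dt`. -/
noncomputable def incGammaNeg (k : ℕ) (u : ℝ) : ℝ :=
  ∫ t in Set.Ioi u, t ^ (-(k : ℝ) - 1) * Real.exp (-t)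

open MeasureTheory Set Real Filter

lemma gammaVal (j : ℕ) : ∫ x in Set.Ioi (0:ℝ), x ^ j * Real.exp (-x) = (Nat.factorial j : ℝ) := by
  rw [← Real.Gamma_nat_eq_factorial, Real.Gamma_eq_integral (by positivity : (0:ℝ) < j + 1)]
  refine setIntegral_congr_fun measurableSet_Ioi fun x hx => ?_
  rw [show ((j:ℝ) + 1 - 1) = (j:ℝ) by ring, Real.rpow_natCast]
  ring

lemma shift_Ioi (u : ℝ) (f : ℝ → ℝ) :
    ∫ t in Set.Ioi u, f t = ∫ x in Set.Ioi (0:ℝ), f (x + u) := by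
  rw [← (measurePreserving_add_right volume u).setIntegral_preimage_emb
      (measurableEmbedding_addRight u) f (Set.Ioi u)]
  congr 1
  ext x; simp

lemma intPowExp (j : ℕ) : IntegrableOn (fun x => x ^ j * Real.exp (-x)) (Set.Ioi (0:ℝ)) := by
  have := Real.GammaIntegral_convergent (s := j+1) (by positivity)
  refine this.congr_fun (fun x hx => ?_) measurableSet_Ioi
  rw [show ((j:ℝ) + 1 - 1) = (j:ℝ) by ring]; beta_reduce; rw [Real.rpow_natCast]
  ring

lemma intPowExpDiv (j : ℕ) (u : ℝ) (hu : 0 < u) :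
    IntegrableOn (fun x => x ^ j * Real.exp (-x) / (u + x)) (Set.Ioi (0:ℝ)) := by
  refine Integrable.mono' ((intPowExp j).const_mul (1/u)) ?_ ?_
  · refine (ContinuousOn.aestronglyMeasurable ?_ measurableSet_Ioi)
    refine ContinuousOn.div (by fun_prop) (by fun_prop) (fun x hx => by
      have : (0:ℝ) < x := hx; positivity)
  · rw [ae_restrict_iff' measurableSet_Ioi]
    filter_upwards with x hx
    have hx0 : (0:ℝ) < x := hx
    rw [Real.norm_eq_abs, abs_of_nonneg (by positivity), one_div, inv_mul_eq_div]
    exact div_le_div_of_nonneg_left (by positivity) hu (by linarith)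

lemma intExpNeg (u : ℝ) : IntegrableOn (fun t => Real.exp (-t)) (Set.Ioi u) := by
  have := exp_neg_integrableOn_Ioi u (b := 1) one_pos
  simpa using this

lemma intRpowExp (k : ℕ) (u : ℝ) (hu : 0 < u) :
    IntegrableOn (fun t => t ^ (-(k:ℝ)-1) * Real.exp (-t)) (Set.Ioi u) := by
  have hneg : -(k:ℝ) - 1 ≤ 0 := by
    have := Nat.cast_nonneg (α := ℝ) k; linarith
  refine Integrable.mono' ((intExpNeg u).const_mul (u ^ (-(k:ℝ)-1))) ?_ ?_
  · refine (ContinuousOn.aestronglyMeasurable ?_ measurableSet_Ioi)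
    refine ContinuousOn.mul (ContinuousOn.rpow_const (by fun_prop) fun t ht =>
      Or.inl (ne_of_gt (lt_trans hu ht))) (by fun_prop)
  · rw [ae_restrict_iff' measurableSet_Ioi]
    filter_upwards with t ht
    have htu : u < t := ht
    have ht0 : (0:ℝ) < t := lt_trans hu htu
    rw [Real.norm_eq_abs, abs_of_nonneg (by positivity)]
    exact mul_le_mul_of_nonneg_right (Real.rpow_le_rpow_of_nonpos hu htu.le hneg)
      (Real.exp_pos _).le

lemma incGammaNeg_succ (k : ℕ) (u : ℝ) :
    incGammaNeg (k+1) u = ∫ t in Set.Ioi u, t ^ (-(k:ℝ)-2) * Real.exp (-t) := by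
  unfold incGammaNeg
  congr 1; funext t
  rw [show (-((k+1:ℕ):ℝ) - 1) = (-(k:ℝ)-2) by push_cast; ring]

lemma intRpowExp' (k : ℕ) (u : ℝ) (hu : 0 < u) :
    IntegrableOn (fun t => t ^ (-(k:ℝ)-2) * Real.exp (-t)) (Set.Ioi u) := by
  have := intRpowExp (k+1) u hu
  refine this.congr_fun (fun t ht => ?_) measurableSet_Ioi
  rw [show (-((k+1:ℕ):ℝ) - 1) = (-(k:ℝ)-2) by push_cast; ring]

lemma incGamma_rec (k : ℕ) (u : ℝ) (hu : 0 < u) :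
    ((k:ℝ)+1) * incGammaNeg (k+1) u = u ^ (-(k:ℝ)-1) * Real.exp (-u) - incGammaNeg k u := by
  have key : ∫ t in Set.Ioi u,
      (((k:ℝ)+1) * (t ^ (-(k:ℝ)-2) * Real.exp (-t)) + t ^ (-(k:ℝ)-1) * Real.exp (-t))
      = u ^ (-(k:ℝ)-1) * Real.exp (-u) := by
    have hderiv : ∀ t ∈ Set.Ioi u, HasDerivAt (fun t : ℝ => -(t ^ (-(k:ℝ)-1)) * Real.exp (-t))
        (((k:ℝ)+1) * (t ^ (-(k:ℝ)-2) * Real.exp (-t)) + t ^ (-(k:ℝ)-1) * Real.exp (-t)) t := by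
      intro t ht
      have ht0 : t ≠ 0 := ne_of_gt (lt_trans hu ht)
      have h1 : HasDerivAt (fun t : ℝ => t ^ (-(k:ℝ)-1)) ((-(k:ℝ)-1) * t ^ ((-(k:ℝ)-1)-1)) t :=
        Real.hasDerivAt_rpow_const (Or.inl ht0)
      have h2 : HasDerivAt (fun t : ℝ => Real.exp (-t)) (-Real.exp (-t)) t := by
        simpa [Function.comp_def] using (Real.hasDerivAt_exp (-t)).comp t (hasDerivAt_neg t)
      have := (h1.neg.mul h2)
      refine HasDerivAt.congr_deriv this ?_
      simp only [Pi.neg_apply]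
      rw [show ((-(k:ℝ)-1)-1) = (-(k:ℝ)-2) by ring]
      ring
    have hint : IntegrableOn (fun t =>
        ((k:ℝ)+1) * (t ^ (-(k:ℝ)-2) * Real.exp (-t)) + t ^ (-(k:ℝ)-1) * Real.exp (-t))
        (Set.Ioi u) :=
      ((intRpowExp' k u hu).const_mul _).add (intRpowExp k u hu)
    have htend : Tendsto (fun t : ℝ => -(t ^ (-(k:ℝ)-1)) * Real.exp (-t)) atTop (nhds 0) := by
      have h1 : Tendsto (fun t : ℝ => t ^ (-(k:ℝ)-1) * Real.exp (-t)) atTop (nhds 0) := by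
        apply squeeze_zero' (g := fun t => Real.exp (-t))
        · filter_upwards [eventually_gt_atTop (0:ℝ)] with t ht
          positivity
        · filter_upwards [eventually_ge_atTop (1:ℝ)] with t ht
          have ht0 : (0:ℝ) < t := lt_of_lt_of_le one_pos ht
          have : t ^ (-(k:ℝ)-1) ≤ 1 := by
            calc t ^ (-(k:ℝ)-1) ≤ t ^ (0:ℝ) := by
                  apply Real.rpow_le_rpow_of_exponent_le ht
                  have := Nat.cast_nonneg (α := ℝ) k; linarith
            _ = 1 := Real.rpow_zero t
          calc t ^ (-(k:ℝ)-1) * Real.exp (-t) ≤ 1 * Real.exp (-t) := by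
                gcongr
          _ = Real.exp (-t) := one_mul _
        · exact Real.tendsto_exp_neg_atTop_nhds_zero
      have := h1.neg
      simpa using this
    have := integral_Ioi_of_hasDerivAt_of_tendsto
      (f := fun t : ℝ => -(t ^ (-(k:ℝ)-1)) * Real.exp (-t)) ?_ hderiv hint htend
    · rw [this]; ring
    · exact ((Real.continuousAt_rpow_const u _ (Or.inl (ne_of_gt hu))).neg.mul
        (by fun_prop)).continuousWithinAt
  rw [integral_add (((intRpowExp' k u hu).const_mul _)) (intRpowExp k u hu),
    integral_const_mul, ← incGammaNeg_succ] at key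
  have hk : incGammaNeg k u = ∫ a in Set.Ioi u, a ^ (-(k:ℝ)-1) * Real.exp (-a) := rfl
  rw [hk]
  linarith [key]

-- integrability of (t-u)^j e^{-t} on Ioi u (u > 0)
lemma intSubPowExp (j : ℕ) (u : ℝ) (hu : 0 < u) :
    IntegrableOn (fun t => (t-u) ^ j * Real.exp (-t)) (Set.Ioi u) := by
  refine Integrable.mono' ((intPowExp j).mono_set (Set.Ioi_subset_Ioi hu.le))
    (((by continuity : Continuous fun t:ℝ => (t-u)^j * Real.exp (-t)).aestronglyMeasurable).restrict) ?_
  rw [ae_restrict_iff' measurableSet_Ioi]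
  filter_upwards with t ht
  have htu : u < t := ht
  have ht0 : (0:ℝ) < t := lt_trans hu htu
  have h1 : (0:ℝ) ≤ t - u := by linarith
  rw [Real.norm_eq_abs, abs_of_nonneg (mul_nonneg (pow_nonneg h1 j) (Real.exp_pos _).le)]
  exact mul_le_mul_of_nonneg_right (pow_le_pow_left₀ h1 (by linarith) j) (Real.exp_pos _).le

-- integrability of (t-u)^j e^{-t}/t on Ioi u (u > 0)
lemma intSubPowExpDiv (j : ℕ) (u : ℝ) (hu : 0 < u) :
    IntegrableOn (fun t => (t-u) ^ j * Real.exp (-t) / t) (Set.Ioi u) := by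
  refine Integrable.mono' (((intPowExp j).mono_set (Set.Ioi_subset_Ioi hu.le)).const_mul (1/u))
    ?_ ?_
  · refine (ContinuousOn.aestronglyMeasurable ?_ measurableSet_Ioi)
    exact ContinuousOn.div (by fun_prop) (by fun_prop)
      (fun t ht => ne_of_gt (lt_trans hu ht))
  · rw [ae_restrict_iff' measurableSet_Ioi]
    filter_upwards with t ht
    have htu : u < t := ht
    have ht0 : (0:ℝ) < t := lt_trans hu htu
    have h1 : (0:ℝ) ≤ t - u := by linarith
    rw [Real.norm_eq_abs, abs_of_nonneg (div_nonneg (mul_nonneg (pow_nonneg h1 j) (Real.exp_pos _).le) ht0.le)]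
    calc (t-u) ^ j * Real.exp (-t) / t ≤ t ^ j * Real.exp (-t) / u :=
          div_le_div₀ (by positivity)
            (mul_le_mul_of_nonneg_right (pow_le_pow_left₀ h1 (by linarith) j) (Real.exp_pos _).le)
            hu htu.le
    _ = 1 / u * (t ^ j * Real.exp (-t)) := by ring
-- value: ∫_{Ioi u} (t-u)^j e^{-t} = e^{-u} j!
lemma subPowExpVal (j : ℕ) (u : ℝ) :
    ∫ t in Set.Ioi u, (t-u) ^ j * Real.exp (-t) = Real.exp (-u) * (Nat.factorial j : ℝ) := by
  rw [shift_Ioi u (fun t => (t-u) ^ j * Real.exp (-t))]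
  have : ∀ x : ℝ, (x + u - u) ^ j * Real.exp (-(x+u)) = Real.exp (-u) * (x ^ j * Real.exp (-x)) := by
    intro x
    rw [show -(x+u) = -x + -u by ring, Real.exp_add]
    ring_nf
  simp_rw [this]
  rw [integral_const_mul, gammaVal]

lemma F_eq (u : ℝ) (hu : 0 < u) : ∀ j : ℕ,
    ∫ t in Set.Ioi u, (t-u) ^ j * Real.exp (-t) / t
      = (Nat.factorial j : ℝ) * u ^ j * incGammaNeg j u := by
  intro j
  induction j with
  | zero =>
    simp only [pow_zero, one_mul, Nat.factorial_zero, Nat.cast_one, mul_one]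
    unfold incGammaNeg
    rw [show (-(0:ℕ) - 1 : ℝ) = -1 by norm_num]
    refine setIntegral_congr_fun measurableSet_Ioi fun t ht => ?_
    have ht0 : (0:ℝ) < t := lt_trans hu ht
    rw [Real.rpow_neg_one]
    field_simp
  | succ j ih =>
    have hsplit : ∫ t in Set.Ioi u, (t-u) ^ (j+1) * Real.exp (-t) / t
        = (∫ t in Set.Ioi u, (t-u) ^ j * Real.exp (-t))
          - u * ∫ t in Set.Ioi u, (t-u) ^ j * Real.exp (-t) / t := by
      rw [← integral_const_mul, ← integral_sub (intSubPowExp j u hu)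
        ((intSubPowExpDiv j u hu).const_mul u)]
      refine setIntegral_congr_fun measurableSet_Ioi fun t ht => ?_
      have ht0 : (0:ℝ) < t := lt_trans hu ht
      have hne : t ≠ 0 := ne_of_gt ht0
      field_simp
      ring
    rw [hsplit, ih, subPowExpVal]
    have hrec := incGamma_rec j u hu
    have hfac : (Nat.factorial (j+1) : ℝ) = ((j:ℝ)+1) * (Nat.factorial j : ℝ) := by
      push_cast [Nat.factorial_succ]; ring
    have hpow : (u : ℝ) ^ (j+1) * u ^ (-(j:ℝ)-1) = 1 := by
      rw [← Real.rpow_natCast u (j+1), ← Real.rpow_add hu]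
      rw [show ((j+1:ℕ):ℝ) + (-(j:ℝ)-1) = 0 by push_cast; ring, Real.rpow_zero]
    calc Real.exp (-u) * (Nat.factorial j : ℝ)
          - u * ((Nat.factorial j : ℝ) * u ^ j * incGammaNeg j u)
        = (Nat.factorial j : ℝ) * (u ^ (j+1) * u ^ (-(j:ℝ)-1)) * Real.exp (-u)
          - (Nat.factorial j : ℝ) * u ^ (j+1) * incGammaNeg j u := by
          rw [hpow]; ring
    _ = (Nat.factorial j : ℝ) * u ^ (j+1) * (u ^ (-(j:ℝ)-1) * Real.exp (-u) - incGammaNeg j u) := by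
          ring
    _ = (Nat.factorial j : ℝ) * u ^ (j+1) * (((j:ℝ)+1) * incGammaNeg (j+1) u) := by rw [hrec]
    _ = (Nat.factorial (j+1) : ℝ) * u ^ (j+1) * incGammaNeg (j+1) u := by rw [hfac]; ring

lemma B_eq (j : ℕ) (u : ℝ) (hu : 0 < u) :
    ∫ x in Set.Ioi (0:ℝ), x ^ j * Real.exp (-x) / (u + x)
      = Real.exp u * ((Nat.factorial j : ℝ) * u ^ j * incGammaNeg j u) := by
  rw [← F_eq u hu j, shift_Ioi u (fun t => (t-u) ^ j * Real.exp (-t) / t), ← integral_const_mul]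
  refine setIntegral_congr_fun measurableSet_Ioi fun x hx => ?_
  have hx0 : (0:ℝ) < x := hx
  rw [show -(x+u) = -x + -u by ring, Real.exp_add]
  have : x + u - u = x := by ring
  rw [this, show u + x = x + u by ring]
  have hexp : Real.exp u * Real.exp (-u) = 1 := by rw [← Real.exp_add]; simp
  field_simp [Real.exp_ne_zero]
  linear_combination (-1 : ℝ) * hexp

lemma intLogPowExp (ρ : ℝ) (hρ : 0 < ρ) (n : ℕ) :
    IntegrableOn (fun x => Real.log (1 + ρ*x) * (x ^ n * Real.exp (-x))) (Set.Ioi (0:ℝ)) := by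
  refine Integrable.mono' ((intPowExp (n+1)).const_mul ρ) ?_ ?_
  · refine (ContinuousOn.aestronglyMeasurable ?_ measurableSet_Ioi)
    refine ContinuousOn.mul (ContinuousOn.log (by fun_prop) fun x hx => ?_) (by fun_prop)
    have hx0 : (0:ℝ) < x := hx
    positivity
  · rw [ae_restrict_iff' measurableSet_Ioi]
    filter_upwards with x hx
    have hx0 : (0:ℝ) < x := hx
    have hl0 : 0 ≤ Real.log (1 + ρ*x) := Real.log_nonneg (by nlinarith)
    rw [Real.norm_eq_abs, abs_of_nonneg (by positivity)]
    have hlog : Real.log (1 + ρ*x) ≤ ρ * x := by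
      have := Real.log_le_sub_one_of_pos (show (0:ℝ) < 1 + ρ*x by nlinarith)
      linarith
    calc Real.log (1 + ρ*x) * (x ^ n * Real.exp (-x)) ≤ (ρ * x) * (x ^ n * Real.exp (-x)) := by
          exact mul_le_mul_of_nonneg_right hlog (by positivity)
    _ = ρ * (x ^ (n+1) * Real.exp (-x)) := by ring

theorem stmt_16 (ρ : ℝ) (hρ : 0 < ρ) (T : ℕ) (hT : 1 ≤ T) :
    (1 / (Nat.factorial (T - 1) : ℝ)) *
        ∫ x in Set.Ioi (0 : ℝ), Real.log (1 + ρ * x) * x ^ (T - 1) * Real.exp (-x) =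
      Real.exp (1 / ρ) * ∑ k ∈ Finset.range T, (1 / ρ) ^ k * incGammaNeg k (1 / ρ) := by
  obtain ⟨n, rfl⟩ : ∃ n, T = n + 1 := ⟨T - 1, (Nat.succ_pred_eq_of_pos hT).symm⟩
  simp only [Nat.add_sub_cancel]
  set u : ℝ := 1 / ρ with hu_def
  have hu : 0 < u := by positivity
  set a : ℕ → ℝ := fun j => (Nat.factorial n : ℝ) / (Nat.factorial j : ℝ) with ha_def
  have ha_pos : ∀ j, 0 ≤ a j := fun j => by positivity
  set P : ℝ → ℝ := fun x => ∑ j ∈ Finset.range (n+1), a j * x ^ j with hP_def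
  -- Step A : algebra
  have stepA : ∀ x : ℝ,
      P x - (∑ j ∈ Finset.range (n+1), a j * ((j:ℝ) * x ^ (j-1))) = x ^ n := by
    intro x
    have h2 : ∑ j ∈ Finset.range (n+1), a j * ((j:ℝ) * x ^ (j-1))
        = ∑ j ∈ Finset.range n, a j * x ^ j := by
      rw [Finset.sum_range_succ']
      simp only [Nat.cast_zero, zero_mul, mul_zero, add_zero]
      refine Finset.sum_congr rfl fun i hi => ?_
      have hfac : a (i+1) * ((i+1:ℕ):ℝ) = a i := by
        simp only [ha_def]
        rw [Nat.factorial_succ]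
        push_cast
        have h1 : ((Nat.factorial i : ℝ)) ≠ 0 := by positivity
        field_simp
      calc a (i+1) * ((((i+1:ℕ)):ℝ) * x ^ (i+1-1)) = (a (i+1) * ((i+1:ℕ):ℝ)) * x ^ i := by
            rw [Nat.add_sub_cancel]; ring
      _ = a i * x ^ i := by rw [hfac]
    rw [hP_def]
    simp only []
    rw [Finset.sum_range_succ, h2]
    have han : a n = 1 := by
      simp only [ha_def]; exact div_self (by positivity)
    rw [han]; ring
  -- Step B : derivative of P
  have hP : ∀ x : ℝ, HasDerivAt P (∑ j ∈ Finset.range (n+1), a j * ((j:ℝ) * x ^ (j-1))) x := by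
    intro x
    exact HasDerivAt.fun_sum fun j hj => (hasDerivAt_pow j x).const_mul (a j)
  -- Step C : derivative of H
  set H : ℝ → ℝ := fun x => Real.log (1 + ρ*x) * (-(Real.exp (-x) * P x)) with hH_def
  have hE : ∀ x : ℝ, HasDerivAt (fun x : ℝ => Real.exp (-x)) (-Real.exp (-x)) x := by
    intro x
    simpa [Function.comp_def] using (Real.hasDerivAt_exp (-x)).comp x (hasDerivAt_neg x)
  have hH : ∀ x ∈ Set.Ioi (0:ℝ), HasDerivAt H
      (ρ/(1+ρ*x) * (-(Real.exp (-x) * P x)) + Real.log (1 + ρ*x) * (x ^ n * Real.exp (-x))) x := by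
    intro x hx
    have hx0 : (0:ℝ) < x := hx
    have h1pos : (0:ℝ) < 1 + ρ*x := by nlinarith
    have hin : HasDerivAt (fun x : ℝ => 1 + ρ*x) ρ x := by
      simpa using ((hasDerivAt_id x).const_mul ρ).const_add 1
    have hlog : HasDerivAt (fun x : ℝ => Real.log (1 + ρ*x)) (ρ/(1+ρ*x)) x := by
      have := (Real.hasDerivAt_log (ne_of_gt h1pos)).comp x hin
      simpa [div_eq_inv_mul, Function.comp_def] using this
    have hQ : HasDerivAt (fun x : ℝ => -(Real.exp (-x) * P x)) (x ^ n * Real.exp (-x)) x := by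
      have := ((hE x).mul (hP x)).neg
      refine HasDerivAt.congr_deriv this ?_
      have := stepA x
      nlinarith [stepA x, Real.exp_pos (-x)]
    have := hlog.mul hQ
    exact this
  -- Step D : integrabilities and pointwise identity
  set G : ℝ → ℝ := fun x => ∑ j ∈ Finset.range (n+1), a j * (x ^ j * Real.exp (-x) / (u + x))
    with hG_def
  have hGint : IntegrableOn G (Set.Ioi (0:ℝ)) :=
    integrable_finset_sum _ fun j hj => ((intPowExpDiv j u hu).const_mul (a j))
  have hpoint : ∀ x ∈ Set.Ioi (0:ℝ),
      ρ/(1+ρ*x) * (-(Real.exp (-x) * P x)) = -(G x) := by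
    intro x hx
    have hx0 : (0:ℝ) < x := hx
    have hux : (0:ℝ) < u + x := by positivity
    have hρu : ρ/(1+ρ*x) = 1/(u+x) := by
      have h1 : 1 + ρ*x = ρ * (u + x) := by
        rw [hu_def]; field_simp
      rw [h1]
      field_simp
    rw [hρu]
    have hGx : G x = P x * Real.exp (-x) / (u + x) := by
      rw [hG_def, hP_def]
      simp only []
      rw [Finset.sum_mul, Finset.sum_div]
      exact Finset.sum_congr rfl fun j hj => by ring
    rw [hGx]
    field_simp
  have hI2 : IntegrableOn (fun x => ρ/(1+ρ*x) * (-(Real.exp (-x) * P x))) (Set.Ioi (0:ℝ)) := by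
    refine (hGint.neg).congr ?_
    rw [EventuallyEq, ae_restrict_iff' measurableSet_Ioi]
    filter_upwards with x hx
    exact (hpoint x hx).symm
  -- Step E : limit of H at infinity
  have hT0 : Tendsto (fun x => Real.log (1+ρ*x) * (Real.exp (-x) * P x)) atTop (nhds 0) := by
    apply squeeze_zero'
      (g := fun x => ∑ j ∈ Finset.range (n+1), ρ * a j * (x ^ (j+1) * Real.exp (-x)))
    · filter_upwards [eventually_gt_atTop (0:ℝ)] with x hx
      have hl0 : 0 ≤ Real.log (1+ρ*x) := Real.log_nonneg (by nlinarith)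
      have hPx : 0 ≤ P x := Finset.sum_nonneg fun j hj => mul_nonneg (ha_pos j) (by positivity)
      positivity
    · filter_upwards [eventually_gt_atTop (0:ℝ)] with x hx
      have hPx : 0 ≤ P x := Finset.sum_nonneg fun j hj => mul_nonneg (ha_pos j) (by positivity)
      have hlog : Real.log (1+ρ*x) ≤ ρ * x := by
        have := Real.log_le_sub_one_of_pos (show (0:ℝ) < 1 + ρ*x by nlinarith)
        linarith
      calc Real.log (1+ρ*x) * (Real.exp (-x) * P x) ≤ (ρ*x) * (Real.exp (-x) * P x) :=
            mul_le_mul_of_nonneg_right hlog (by positivity)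
      _ = ∑ j ∈ Finset.range (n+1), ρ * a j * (x ^ (j+1) * Real.exp (-x)) := by
            rw [hP_def]
            simp only []
            rw [Finset.mul_sum, Finset.mul_sum]
            refine Finset.sum_congr rfl fun j hj => ?_
            ring
    · have : Tendsto (fun x : ℝ => ∑ j ∈ Finset.range (n+1),
          ρ * a j * (x ^ (j+1) * Real.exp (-x))) atTop
          (nhds (∑ j ∈ Finset.range (n+1), ρ * a j * 0)) := by
        refine tendsto_finset_sum _ fun j hj => ?_
        exact (tendsto_pow_mul_exp_neg_atTop_nhds_zero (j+1)).const_mul (ρ * a j)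
      simpa using this
  have htendH : Tendsto H atTop (nhds 0) := by
    have := hT0.neg
    simp only [neg_zero] at this
    exact this.congr fun x => by rw [hH_def]; ring
  -- Step F : FTC
  have hPc : Continuous P := continuous_finset_sum _ fun j _ => continuous_const.mul (continuous_pow j)
  have hcont : ContinuousWithinAt H (Set.Ici (0:ℝ)) 0 := by
    refine ContinuousAt.continuousWithinAt ?_
    refine ContinuousAt.mul ?_ (by fun_prop)
    exact ContinuousAt.comp (g := Real.log) (f := fun x : ℝ => 1 + ρ*x)
      (Real.continuousAt_log (by norm_num)) (by fun_prop)
  have hint : IntegrableOn (fun x =>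
      ρ/(1+ρ*x) * (-(Real.exp (-x) * P x)) + Real.log (1 + ρ*x) * (x ^ n * Real.exp (-x)))
      (Set.Ioi (0:ℝ)) := hI2.add (intLogPowExp ρ hρ n)
  have hFTC := integral_Ioi_of_hasDerivAt_of_tendsto hcont hH hint htendH
  have hH0 : H 0 = 0 := by
    rw [hH_def]; simp
  rw [hH0, sub_zero, integral_add hI2 (intLogPowExp ρ hρ n)] at hFTC
  have hI2val : ∫ x in Set.Ioi (0:ℝ), ρ/(1+ρ*x) * (-(Real.exp (-x) * P x))
      = -∫ x in Set.Ioi (0:ℝ), G x := by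
    rw [← integral_neg]
    exact setIntegral_congr_fun measurableSet_Ioi hpoint
  rw [hI2val] at hFTC
  have hlogval : ∫ x in Set.Ioi (0:ℝ), Real.log (1 + ρ*x) * (x ^ n * Real.exp (-x))
      = ∫ x in Set.Ioi (0:ℝ), G x := by linarith
  -- Step G : compute ∫ G
  have hGval : ∫ x in Set.Ioi (0:ℝ), G x
      = Real.exp u * ((Nat.factorial n : ℝ) *
          ∑ k ∈ Finset.range (n+1), u ^ k * incGammaNeg k u) := by
    rw [hG_def]
    simp only []
    rw [integral_finset_sum _ fun j hj => ((intPowExpDiv j u hu).const_mul (a j))]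
    have : ∀ j ∈ Finset.range (n+1),
        (∫ x in Set.Ioi (0:ℝ), a j * (x ^ j * Real.exp (-x) / (u + x)))
        = Real.exp u * ((Nat.factorial n : ℝ) * (u ^ j * incGammaNeg j u)) := by
      intro j hj
      rw [integral_const_mul, B_eq j u hu]
      have hjfac : a j * (Nat.factorial j : ℝ) = (Nat.factorial n : ℝ) := by
        rw [ha_def]
        field_simp
      calc a j * (Real.exp u * ((Nat.factorial j : ℝ) * u ^ j * incGammaNeg j u))
          = Real.exp u * ((a j * (Nat.factorial j : ℝ)) * (u ^ j * incGammaNeg j u)) := by ring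
      _ = _ := by rw [hjfac]
    rw [Finset.sum_congr rfl this, ← Finset.mul_sum, ← Finset.mul_sum]
  -- final assembly
  have hfacne : (Nat.factorial n : ℝ) ≠ 0 := by positivity
  have hgoal_int : ∫ x in Set.Ioi (0:ℝ), Real.log (1 + ρ*x) * x ^ n * Real.exp (-x)
      = ∫ x in Set.Ioi (0:ℝ), Real.log (1 + ρ*x) * (x ^ n * Real.exp (-x)) := by
    refine setIntegral_congr_fun measurableSet_Ioi fun x hx => ?_
    ring
  rw [hgoal_int, hlogval, hGval]
  field_simp
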